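/- Let E̅₁ be an upper expectation functional, E_₂ a lower expectation functional, and T̅ an upper transition operator with weak coefficient of ergodicity ρ(T̅). Then d(E̅₁∘T̅, E_₂∘T̅) ≤ d(E̅₁, E_₂)·ρ(T̅), where d(E̅₁, E_₂) = max_{f∈L₁} (E̅₁(f) - E_₂(f)). -/

import Mathlib

open Finset Set

noncomputable section

/-- Functions with values in [0,1]. -/
def L1 (X : Type*) : Set (X → ℝ) := {f | ∀ x, 0 ≤ f x ∧ f x ≤ 1}

/-- Probability mass function on a finite set. -/
def IsPMF {X : Type*} [Fintype X] (p : X → ℝ) : Prop :=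
  (∀ x, 0 ≤ p x) ∧ ∑ x, p x = 1

/-- A credal set: nonempty compact convex set of pmfs. -/
def IsCredal {X : Type*} [Fintype X] (M : Set (X → ℝ)) : Prop :=
  M.Nonempty ∧ IsCompact M ∧ Convex ℝ M ∧ ∀ p ∈ M, IsPMF p

/-- Linear expectation with respect to a pmf. -/
def linExp {X : Type*} [Fintype X] (p f : X → ℝ) : ℝ := ∑ x, p x * f x

/-- Upper expectation functional of a credal set. -/
def upperExp {X : Type*} [Fintype X] (M : Set (X → ℝ)) (f : X → ℝ) : ℝ :=
  sSup ((fun p => linExp p f) '' M)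

/-- Lower expectation functional of a credal set. -/
def lowerExp {X : Type*} [Fintype X] (M : Set (X → ℝ)) (f : X → ℝ) : ℝ :=
  sInf ((fun p => linExp p f) '' M)

/-- Chebyshev (sup) distance between functions. -/
def dCheb {X : Type*} (f g : X → ℝ) : ℝ := ⨆ x, |f x - g x|

/-- Distance between two (upper) expectation functionals. -/
def dFun {X : Type*} (F G : (X → ℝ) → ℝ) : ℝ :=
  sSup ((fun f => |F f - G f|) '' L1 X)

/-- Distance between an upper and a lower expectation functional. -/
def dUL {X : Type*} (F G : (X → ℝ) → ℝ) : ℝ :=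
  sSup ((fun f => F f - G f) '' L1 X)

/-- Upper transition operator: rows are upper expectation functionals. -/
def IsUpperTrans {X : Type*} [Fintype X] (T : (X → ℝ) → (X → ℝ)) : Prop :=
  ∃ M : X → Set (X → ℝ), (∀ x, IsCredal (M x)) ∧ ∀ f x, T f x = upperExp (M x) f

/-- Matching pair of upper and lower transition operators from the same credal sets. -/
def IsTransPair {X : Type*} [Fintype X] (T Tl : (X → ℝ) → (X → ℝ)) : Prop :=
  ∃ M : X → Set (X → ℝ), (∀ x, IsCredal (M x)) ∧
    (∀ f x, T f x = upperExp (M x) f) ∧ (∀ f x, Tl f x = lowerExp (M x) f)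

/-- Distance between two (upper) transition operators. -/
def dOp {X : Type*} (T T' : (X → ℝ) → (X → ℝ)) : ℝ :=
  sSup ((fun f => dCheb (T f) (T' f)) '' L1 X)

/-- Imprecision distance between an upper and a lower transition operator. -/
def dOpUL {X : Type*} (T Tl : (X → ℝ) → (X → ℝ)) : ℝ :=
  sSup ((fun f => ⨆ x, (T f x - Tl f x)) '' L1 X)

/-- Weak coefficient of ergodicity. -/
def rho {X : Type*} (T : (X → ℝ) → (X → ℝ)) : ℝ :=
  sSup {r | ∃ f ∈ L1 X, ∃ x y : X, r = |T f x - T f y|}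

lemma zero_mem_L1 {X : Type*} : (0 : X → ℝ) ∈ L1 X := fun _ => by simp

lemma pmf_le_one {X : Type*} [Fintype X] {p : X → ℝ} (hp : IsPMF p) (x : X) : p x ≤ 1 := by
  have := Finset.single_le_sum (f := p) (fun i _ => hp.1 i) (Finset.mem_univ x)
  linarith [hp.2]

lemma linExp_nonneg {X : Type*} [Fintype X] {p f : X → ℝ} (hp : IsPMF p) (hf : f ∈ L1 X) :
    0 ≤ linExp p f :=
  Finset.sum_nonneg fun x _ => mul_nonneg (hp.1 x) (hf x).1

lemma linExp_le_one {X : Type*} [Fintype X] {p f : X → ℝ} (hp : IsPMF p) (hf : f ∈ L1 X) :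
    linExp p f ≤ 1 := by
  calc linExp p f ≤ ∑ x, p x * 1 :=
        Finset.sum_le_sum fun x _ => mul_le_mul_of_nonneg_left (hf x).2 (hp.1 x)
    _ = 1 := by simp [hp.2]

lemma abs_linExp_le {X : Type*} [Fintype X] {p : X → ℝ} (hp : IsPMF p) (f : X → ℝ) :
    |linExp p f| ≤ ∑ x, |f x| := by
  calc |linExp p f| ≤ ∑ x, |p x * f x| := Finset.abs_sum_le_sum_abs _ _
    _ ≤ ∑ x, |f x| := Finset.sum_le_sum fun x _ => by
        rw [abs_mul, abs_of_nonneg (hp.1 x)]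
        exact mul_le_of_le_one_left (abs_nonneg _) (pmf_le_one hp x)

lemma bddAbove_linExp {X : Type*} [Fintype X] {M : Set (X → ℝ)} (hM : IsCredal M) (f : X → ℝ) :
    BddAbove ((fun p => linExp p f) '' M) := by
  refine ⟨∑ x, |f x|, ?_⟩
  rintro _ ⟨p, hp, rfl⟩
  exact (abs_le.mp (abs_linExp_le (hM.2.2.2 p hp) f)).2

lemma bddBelow_linExp {X : Type*} [Fintype X] {M : Set (X → ℝ)} (hM : IsCredal M) (f : X → ℝ) :
    BddBelow ((fun p => linExp p f) '' M) := by
  refine ⟨-∑ x, |f x|, ?_⟩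
  rintro _ ⟨p, hp, rfl⟩
  exact (abs_le.mp (abs_linExp_le (hM.2.2.2 p hp) f)).1

lemma upperExp_nonneg {X : Type*} [Fintype X] {M : Set (X → ℝ)} (hM : IsCredal M) {f : X → ℝ}
    (hf : f ∈ L1 X) : 0 ≤ upperExp M f := by
  obtain ⟨p, hp⟩ := hM.1
  exact le_trans (linExp_nonneg (hM.2.2.2 p hp) hf) (le_csSup (bddAbove_linExp hM f) ⟨p, hp, rfl⟩)

lemma upperExp_le_one {X : Type*} [Fintype X] {M : Set (X → ℝ)} (hM : IsCredal M) {f : X → ℝ}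
    (hf : f ∈ L1 X) : upperExp M f ≤ 1 := by
  apply csSup_le (hM.1.image _)
  rintro _ ⟨p, hp, rfl⟩
  exact linExp_le_one (hM.2.2.2 p hp) hf

lemma lowerExp_nonneg {X : Type*} [Fintype X] {M : Set (X → ℝ)} (hM : IsCredal M) {f : X → ℝ}
    (hf : f ∈ L1 X) : 0 ≤ lowerExp M f := by
  apply le_csInf (hM.1.image _)
  rintro _ ⟨p, hp, rfl⟩
  exact linExp_nonneg (hM.2.2.2 p hp) hf

lemma linExp_affine {X : Type*} [Fintype X] {p : X → ℝ} (hp : IsPMF p) (c m : ℝ) (g : X → ℝ) :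
    linExp p (fun x => c * g x + m) = c * linExp p g + m := by
  have h : ∀ x : X, p x * (c * g x + m) = c * (p x * g x) + m * p x := fun x => by ring
  simp only [linExp, h, Finset.sum_add_distrib, ← Finset.mul_sum, hp.2, mul_one]

lemma sSup_affine {S : Set ℝ} (hS : S.Nonempty) (hb : BddAbove S) {c m : ℝ} (hc : 0 < c) :
    sSup ((fun t => c * t + m) '' S) = c * sSup S + m := by
  obtain ⟨B, hB⟩ := hb
  have hb' : BddAbove ((fun t => c * t + m) '' S) := by
    refine ⟨c * B + m, ?_⟩
    rintro _ ⟨t, ht, rfl⟩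
    have := hB ht
    dsimp only
    nlinarith
  apply le_antisymm
  · apply csSup_le (hS.image _)
    rintro _ ⟨t, ht, rfl⟩
    have := le_csSup ⟨B, hB⟩ ht
    dsimp only
    nlinarith
  · have h1 : sSup S ≤ (sSup ((fun t => c * t + m) '' S) - m) / c := by
      apply csSup_le hS
      intro t ht
      have := le_csSup hb' ⟨t, ht, rfl⟩
      dsimp only at this
      rw [le_div_iff₀ hc]
      nlinarith
    rw [le_div_iff₀ hc] at h1
    nlinarith

lemma sInf_affine {S : Set ℝ} (hS : S.Nonempty) (hb : BddBelow S) {c m : ℝ} (hc : 0 < c) :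
    sInf ((fun t => c * t + m) '' S) = c * sInf S + m := by
  obtain ⟨B, hB⟩ := hb
  have hb' : BddBelow ((fun t => c * t + m) '' S) := by
    refine ⟨c * B + m, ?_⟩
    rintro _ ⟨t, ht, rfl⟩
    have := hB ht
    dsimp only
    nlinarith
  apply le_antisymm
  · have h1 : (sInf ((fun t => c * t + m) '' S) - m) / c ≤ sInf S := by
      apply le_csInf hS
      intro t ht
      have := csInf_le hb' ⟨t, ht, rfl⟩
      dsimp only at this
      rw [div_le_iff₀ hc]
      nlinarith
    rw [div_le_iff₀ hc] at h1
    nlinarith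
  · apply le_csInf (hS.image _)
    rintro _ ⟨t, ht, rfl⟩
    have := csInf_le ⟨B, hB⟩ ht
    dsimp only
    nlinarith

lemma upperExp_affine {X : Type*} [Fintype X] {M : Set (X → ℝ)} (hM : IsCredal M)
    {c m : ℝ} (hc : 0 < c) (g : X → ℝ) :
    upperExp M (fun x => c * g x + m) = c * upperExp M g + m := by
  unfold upperExp
  have himg : ((fun p => linExp p (fun x => c * g x + m)) '' M)
      = (fun t => c * t + m) '' ((fun p => linExp p g) '' M) := by
    rw [Set.image_image]
    apply Set.image_congr
    intro p hp
    exact linExp_affine (hM.2.2.2 p hp) c m g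
  rw [himg, sSup_affine (hM.1.image _) (bddAbove_linExp hM g) hc]

lemma lowerExp_affine {X : Type*} [Fintype X] {M : Set (X → ℝ)} (hM : IsCredal M)
    {c m : ℝ} (hc : 0 < c) (g : X → ℝ) :
    lowerExp M (fun x => c * g x + m) = c * lowerExp M g + m := by
  unfold lowerExp
  have himg : ((fun p => linExp p (fun x => c * g x + m)) '' M)
      = (fun t => c * t + m) '' ((fun p => linExp p g) '' M) := by
    rw [Set.image_image]
    apply Set.image_congr
    intro p hp
    exact linExp_affine (hM.2.2.2 p hp) c m g
  rw [himg, sInf_affine (hM.1.image _) (bddBelow_linExp hM g) hc]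

lemma linExp_const {X : Type*} [Fintype X] {p : X → ℝ} (hp : IsPMF p) (m : ℝ) :
    linExp p (fun _ => m) = m := by
  simp only [linExp, mul_comm, ← Finset.mul_sum, hp.2, mul_one]

theorem stmt10 {X : Type*} [Fintype X] [Nonempty X]
    (M1 M2 : Set (X → ℝ)) (h1 : IsCredal M1) (h2 : IsCredal M2)
    (T : (X → ℝ) → (X → ℝ)) (hT : IsUpperTrans T) :
    dUL (fun f => upperExp M1 (T f)) (fun f => lowerExp M2 (T f)) ≤
      dUL (upperExp M1) (lowerExp M2) * rho T := by
  obtain ⟨MT, hMT, hTval⟩ := hT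
  -- T maps L1 to L1
  have hTL1 : ∀ f ∈ L1 X, T f ∈ L1 X := by
    intro f hf x
    rw [hTval f x]
    exact ⟨upperExp_nonneg (hMT x) hf, upperExp_le_one (hMT x) hf⟩
  -- the dUL set is bounded above by 1
  have hbddD : BddAbove ((fun f => upperExp M1 f - lowerExp M2 f) '' L1 X) := by
    refine ⟨1, ?_⟩
    rintro _ ⟨f, hf, rfl⟩
    have := upperExp_le_one h1 hf
    have := lowerExp_nonneg h2 hf
    simp only
    linarith
  -- D ≥ 0
  have hD0 : 0 ≤ dUL (upperExp M1) (lowerExp M2) := by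
    have hm : (0:ℝ) ∈ (fun f => upperExp M1 f - lowerExp M2 f) '' L1 X := by
      refine ⟨0, zero_mem_L1, ?_⟩
      have hu : upperExp M1 (0 : X → ℝ) = 0 := by
        unfold upperExp
        have : (fun p => linExp p (0 : X → ℝ)) '' M1 = {0} := by
          have : ∀ p ∈ M1, linExp p (0 : X → ℝ) = 0 := fun p _ => by simp [linExp]
          rw [show (fun p => linExp p (0 : X → ℝ)) '' M1 = (fun _ => (0:ℝ)) '' M1 from
            Set.image_congr this]
          exact h1.1.image_const 0
        rw [this, csSup_singleton]
      have hl : lowerExp M2 (0 : X → ℝ) = 0 := by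
        unfold lowerExp
        have : (fun p => linExp p (0 : X → ℝ)) '' M2 = {0} := by
          have : ∀ p ∈ M2, linExp p (0 : X → ℝ) = 0 := fun p _ => by simp [linExp]
          rw [show (fun p => linExp p (0 : X → ℝ)) '' M2 = (fun _ => (0:ℝ)) '' M2 from
            Set.image_congr this]
          exact h2.1.image_const 0
        rw [this, csInf_singleton]
      dsimp only
      rw [hu, hl, sub_zero]
    exact le_csSup hbddD hm
  -- rho set bounded above by 1
  have hbddRho : BddAbove {r | ∃ f ∈ L1 X, ∃ x y : X, r = |T f x - T f y|} := by
    refine ⟨1, ?_⟩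
    rintro _ ⟨f, hf, x, y, rfl⟩
    have hx := hTL1 f hf x
    have hy := hTL1 f hf y
    rw [abs_le]
    constructor <;> linarith [hx.1, hx.2, hy.1, hy.2]
  -- rho ≥ 0
  have hρ0 : 0 ≤ rho T := by
    obtain ⟨x⟩ := ‹Nonempty X›
    have : (0:ℝ) ∈ {r | ∃ f ∈ L1 X, ∃ x y : X, r = |T f x - T f y|} :=
      ⟨0, zero_mem_L1, x, x, by simp⟩
    exact le_csSup hbddRho this
  -- main bound per f
  apply Real.sSup_le _ (mul_nonneg hD0 hρ0)
  rintro _ ⟨f, hf, rfl⟩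
  simp only
  set g := T f with hgdef
  have hg : g ∈ L1 X := hTL1 f hf
  have hXne : (Finset.univ : Finset X).Nonempty := Finset.univ_nonempty
  set m := Finset.univ.inf' hXne g with hm
  set Mx := Finset.univ.sup' hXne g with hMx
  have hml : ∀ x, m ≤ g x := fun x => Finset.inf'_le g (Finset.mem_univ x)
  have hMu : ∀ x, g x ≤ Mx := fun x => Finset.le_sup' g (Finset.mem_univ x)
  set c := Mx - m with hc
  have hc0 : 0 ≤ c := by
    obtain ⟨x⟩ := ‹Nonempty X›
    have := hml x; have := hMu x
    simp only [hc]; linarith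
  -- c ≤ rho T
  have hcρ : c ≤ rho T := by
    obtain ⟨x₀, _, hx₀⟩ := Finset.exists_mem_eq_sup' hXne g
    obtain ⟨y₀, _, hy₀⟩ := Finset.exists_mem_eq_inf' hXne g
    have hmem : c ∈ {r | ∃ f ∈ L1 X, ∃ x y : X, r = |T f x - T f y|} := by
      refine ⟨f, hf, x₀, y₀, ?_⟩
      have : T f x₀ - T f y₀ = c := by
        simp only [hc, hm, hMx, hx₀, hy₀, ← hgdef]
      rw [← this, abs_of_nonneg (by rw [this]; exact hc0)]
    exact le_csSup hbddRho hmem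
  rcases eq_or_lt_of_le hc0 with hceq | hcpos
  · -- g is constant, difference is 0
    have hconst : ∀ x, g x = m := by
      intro x
      have := hml x; have := hMu x
      have : Mx = m := by simp only [hc] at hceq; linarith
      linarith [hml x, hMu x, this]
    have hgm : g = fun _ => m := funext hconst
    have hu : upperExp M1 g = m := by
      unfold upperExp
      rw [hgm, show (fun p => linExp p fun _ => m) '' M1 = (fun _ => m) '' M1 from
        Set.image_congr (fun p hp => linExp_const (h1.2.2.2 p hp) m), h1.1.image_const,
        csSup_singleton]
    have hl : lowerExp M2 g = m := by
      unfold lowerExp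
      rw [hgm, show (fun p => linExp p fun _ => m) '' M2 = (fun _ => m) '' M2 from
        Set.image_congr (fun p hp => linExp_const (h2.2.2.2 p hp) m), h2.1.image_const,
        csInf_singleton]
    rw [hu, hl, sub_self]
    exact mul_nonneg hD0 hρ0
  · -- scale
    set g' : X → ℝ := fun x => (g x - m) / c with hg'
    have hg'L1 : g' ∈ L1 X := by
      intro x
      constructor
      · exact div_nonneg (by linarith [hml x]) (le_of_lt hcpos)
      · rw [div_le_one hcpos]
        have := hMu x
        simp only [hc]; linarith
    have hgeq : g = fun x => c * g' x + m := by
      funext x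
      show g x = c * ((g x - m) / c) + m
      rw [mul_div_cancel₀ (g x - m) hcpos.ne']
      ring
    have hup : upperExp M1 g = c * upperExp M1 g' + m := by
      rw [hgeq]; exact upperExp_affine h1 hcpos g'
    have hlow : lowerExp M2 g = c * lowerExp M2 g' + m := by
      rw [hgeq]; exact lowerExp_affine h2 hcpos g'
    have hkey : upperExp M1 g' - lowerExp M2 g' ≤ dUL (upperExp M1) (lowerExp M2) :=
      le_csSup hbddD ⟨g', hg'L1, rfl⟩
    rw [hup, hlow]
    have h1' : c * upperExp M1 g' + m - (c * lowerExp M2 g' + m)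
        = c * (upperExp M1 g' - lowerExp M2 g') := by ring
    rw [h1']
    calc c * (upperExp M1 g' - lowerExp M2 g')
        ≤ c * dUL (upperExp M1) (lowerExp M2) :=
          mul_le_mul_of_nonneg_left hkey (le_of_lt hcpos)
      _ ≤ rho T * dUL (upperExp M1) (lowerExp M2) :=
          mul_le_mul_of_nonneg_right hcρ hD0
      _ = dUL (upperExp M1) (lowerExp M2) * rho T := mul_comm _ _
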